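/- (Szegő's inequality) Let m ≥ 1 be a natural number, let a_1 ≥ a_2 ≥ ... ≥ a_{2m-1} ≥ 0 be real numbers, and let f : ℝ → ℝ be convex on the interval [0, a_1]. Then ∑_{j=1}^{2m-1} (-1)^{j-1} f(a_j) ≥ f( ∑_{j=1}^{2m-1} (-1)^{j-1} a_j ). -/

import Mathlib

/-- Key convexity lemma: for `z ≤ y ≤ x` with `x, z` in the convex set,
`f y + f (x - y + z) ≤ f x + f z`. -/
lemma conv_key {s : Set ℝ} {f : ℝ → ℝ} (hf : ConvexOn ℝ s f) {x y z : ℝ}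
    (hx : x ∈ s) (hz : z ∈ s) (hzy : z ≤ y) (hyx : y ≤ x) :
    f y + f (x - y + z) ≤ f x + f z := by
  rcases eq_or_lt_of_le (hzy.trans hyx) with h | h
  · have hyx' : y = x := le_antisymm hyx (h ▸ hzy)
    have hz' : z = x := h
    rw [hyx', hz', show x - x + x = x from by ring]
  · set lam := (y - z) / (x - z) with hlam
    have hxz : x - z ≠ 0 := sub_ne_zero.mpr h.ne'
    have h0 : 0 ≤ lam := by
      apply div_nonneg <;> linarith
    have h1 : lam ≤ 1 := by
      rw [div_le_one (by linarith)]; linarith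
    have hy' : lam * x + (1 - lam) * z = y := by
      rw [hlam]; linear_combination div_mul_cancel₀ (y - z) hxz
    have hw : (1 - lam) * x + lam * z = x - y + z := by
      have : lam * (x - z) = y - z := by rw [hlam]; exact div_mul_cancel₀ _ hxz
      nlinarith [this]
    have A := hf.2 hx hz h0 (by linarith) (by ring : lam + (1 - lam) = 1)
    have B := hf.2 hx hz (by linarith : (0:ℝ) ≤ 1 - lam) h0
      (by ring : (1 - lam) + lam = 1)
    simp only [smul_eq_mul] at A B
    rw [hy'] at A
    rw [hw] at B
    linarith

lemma sum_shift (m : ℕ) (hm : 1 ≤ m) (g : ℕ → ℝ) :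
    ∑ j ∈ Finset.range (2 * (m + 1) - 1), (-1 : ℝ) ^ j * g j =
      g 0 - g 1 + ∑ j ∈ Finset.range (2 * m - 1), (-1 : ℝ) ^ j * g (j + 2) := by
  have h1 : 2 * (m + 1) - 1 = (2 * m - 1) + 1 + 1 := by omega
  rw [h1, Finset.sum_range_succ', Finset.sum_range_succ']
  have h2 : ∀ i, ((-1 : ℝ)) ^ (i + 1 + 1) * g (i + 1 + 1) = (-1) ^ i * g (i + 2) := by
    intro i
    have : i + 1 + 1 = i + 2 := rfl
    rw [this, pow_add]
    norm_num
  rw [Finset.sum_congr rfl (fun i _ => h2 i)]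
  norm_num
  ring

/-- The alternating sum of a decreasing nonnegative sequence of odd length lies
in `[0, a 0]`. -/
lemma alt_bounds (m : ℕ) (hm : 1 ≤ m) (a : ℕ → ℝ)
    (hmono : ∀ i, i + 1 < 2 * m - 1 → a (i + 1) ≤ a i)
    (hlast : 0 ≤ a (2 * m - 2)) :
    0 ≤ ∑ j ∈ Finset.range (2 * m - 1), (-1 : ℝ) ^ j * a j ∧
      ∑ j ∈ Finset.range (2 * m - 1), (-1 : ℝ) ^ j * a j ≤ a 0 := by
  induction m, hm using Nat.le_induction generalizing a with
  | base =>
    simp only [show 2 * 1 - 1 = 1 from rfl, Finset.sum_range_one, pow_zero, one_mul]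
    exact ⟨hlast, le_rfl⟩
  | succ m hm ih =>
    have h01 : a 1 ≤ a 0 := hmono 0 (by omega)
    have h12 : a 2 ≤ a 1 := hmono 1 (by omega)
    have ih' := ih (fun i => a (i + 2))
      (fun i hi => hmono (i + 2) (by omega))
      (by show 0 ≤ a (2 * m - 2 + 2)
          have h : 2 * m - 2 + 2 = 2 * (m + 1) - 2 := by omega
          rw [h]; exact hlast)
    rw [sum_shift m hm]
    constructor
    · nlinarith [ih'.1, ih'.2]
    · nlinarith [ih'.1, ih'.2]

/-- Szegő's inequality: Let `m ≥ 1`, let `a 0 ≥ a 1 ≥ ⋯ ≥ a (2m-2) ≥ 0`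
(the terms `a_1 ≥ ⋯ ≥ a_{2m-1} ≥ 0`, indexed from `0`), and let `f : ℝ → ℝ` be convex
on `[0, a 0]`. Then `∑_{j=0}^{2m-2} (-1)^j f (a j) ≥ f (∑_{j=0}^{2m-2} (-1)^j a j)`. -/
theorem stmt_13 (m : ℕ) (hm : 1 ≤ m) (a : ℕ → ℝ) (f : ℝ → ℝ)
    (hmono : ∀ i, i + 1 < 2 * m - 1 → a (i + 1) ≤ a i)
    (hlast : 0 ≤ a (2 * m - 2))
    (hf : ConvexOn ℝ (Set.Icc 0 (a 0)) f) :
    ∑ j ∈ Finset.range (2 * m - 1), (-1 : ℝ) ^ j * f (a j) ≥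
      f (∑ j ∈ Finset.range (2 * m - 1), (-1 : ℝ) ^ j * a j) := by
  induction m, hm using Nat.le_induction generalizing a f with
  | base =>
    simp only [show 2 * 1 - 1 = 1 from rfl, Finset.sum_range_one, pow_zero, one_mul]
    exact le_rfl
  | succ m hm ih =>
    have h01 : a 1 ≤ a 0 := hmono 0 (by omega)
    have h12 : a 2 ≤ a 1 := hmono 1 (by omega)
    have hmono' : ∀ i, i + 1 < 2 * m - 1 → a (i + 1 + 2) ≤ a (i + 2) :=
      fun i hi => hmono (i + 2) (by omega)
    have hlast' : 0 ≤ a (2 * m - 2 + 2) := by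
      have : 2 * m - 2 + 2 = 2 * (m + 1) - 2 := by omega
      rw [this]; exact hlast
    have hb := alt_bounds m hm (fun i => a (i + 2)) hmono' hlast'
    set s' := ∑ j ∈ Finset.range (2 * m - 1), (-1 : ℝ) ^ j * a (j + 2) with hs'
    have hs0 : 0 ≤ s' := hb.1
    have hs2 : s' ≤ a 2 := hb.2
    have ha0 : 0 ≤ a 0 := by linarith
    have hf' : ConvexOn ℝ (Set.Icc 0 (a 2)) f :=
      hf.subset (Set.Icc_subset_Icc le_rfl (by linarith)) (convex_Icc _ _)
    have ihsum := ih (fun i => a (i + 2)) f hmono' hlast' hf'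
    have hck := conv_key hf (x := a 0) (y := a 1) (z := s')
      (Set.mem_Icc.mpr ⟨ha0, le_rfl⟩) (Set.mem_Icc.mpr ⟨hs0, by linarith⟩)
      (by linarith) h01
    rw [sum_shift m hm, sum_shift m hm]
    rw [← hs'] at ihsum
    linarith
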